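/- arXiv:1707.08322 — 3 statements merged into one kernel-verified Lean document; each statement's English description precedes it below -/
import Mathlib

section
/- For every real number x₀ and every real number x, log(1 + exp(x)) ≤ log(1 + exp(x₀)) + σ(x₀)·(x − x₀) + (1/8)·(x − x₀)², where σ(t) = 1/(1 + exp(−t)) is the logistic function. Consequently, for any s ∈ ℝ, the logistic log-likelihood term s·x − log(1 + exp(x)) is bounded below by its quadratic surrogate s·x₀ − log(1 + exp(x₀)) + (s − σ(x₀))·(x − x₀) − (1/8)·(x − x₀)². -/
/-- The logistic (sigmoid) function σ(t) = 1/(1+exp(−t)). -/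
noncomputable def logistic (t : ℝ) : ℝ := 1 / (1 + Real.exp (-t))

lemma one_add_exp_pos (t : ℝ) : (0:ℝ) < 1 + Real.exp t := by positivity

lemma logistic_eq (t : ℝ) : logistic t = Real.exp t / (1 + Real.exp t) := by
  unfold logistic
  rw [Real.exp_neg]
  have h := Real.exp_pos t
  field_simp
  ring

noncomputable def φ (t : ℝ) : ℝ := (1/8) * t ^ 2 - Real.log (1 + Real.exp t)

lemma hasDerivAt_log1exp (t : ℝ) :
    HasDerivAt (fun u => Real.log (1 + Real.exp u)) (Real.exp t / (1 + Real.exp t)) t := by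
  have h1 : HasDerivAt (fun u => 1 + Real.exp u) (Real.exp t) t :=
    (Real.hasDerivAt_exp t).const_add 1
  exact h1.log (ne_of_gt (one_add_exp_pos t))

lemma hasDerivAt_φ (t : ℝ) :
    HasDerivAt φ (t / 4 - Real.exp t / (1 + Real.exp t)) t := by
  have h1 : HasDerivAt (fun u : ℝ => (1/8 : ℝ) * u ^ 2) (t / 4) t := by
    have := (hasDerivAt_pow 2 t).const_mul (1/8 : ℝ)
    refine this.congr_deriv ?_
    norm_num
    ring
  exact h1.sub (hasDerivAt_log1exp t)

lemma deriv_φ : deriv φ = fun t => t / 4 - Real.exp t / (1 + Real.exp t) := by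
  funext t; exact (hasDerivAt_φ t).deriv

lemma hasDerivAt_φ' (t : ℝ) :
    HasDerivAt (fun u => u / 4 - Real.exp u / (1 + Real.exp u))
      (1/4 - Real.exp t / (1 + Real.exp t) ^ 2) t := by
  have h1 : HasDerivAt (fun u : ℝ => u / 4) (1/4 : ℝ) t := by
    simpa using (hasDerivAt_id t).div_const 4
  have h2 : HasDerivAt (fun u => Real.exp u / (1 + Real.exp u))
      (Real.exp t / (1 + Real.exp t) ^ 2) t := by
    have := (Real.hasDerivAt_exp t).div ((Real.hasDerivAt_exp t).const_add 1)
      (ne_of_gt (one_add_exp_pos t))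
    refine this.congr_deriv ?_
    congr 1
    ring
  exact h1.sub h2

lemma convex_φ : ConvexOn ℝ Set.univ φ := by
  apply convexOn_univ_of_deriv2_nonneg
  · exact fun t => (hasDerivAt_φ t).differentiableAt
  · rw [deriv_φ]
    exact fun t => (hasDerivAt_φ' t).differentiableAt
  · intro t
    show (0:ℝ) ≤ deriv (deriv φ) t
    rw [deriv_φ]
    rw [show deriv (fun u => u / 4 - Real.exp u / (1 + Real.exp u)) t
        = 1/4 - Real.exp t / (1 + Real.exp t) ^ 2 from (hasDerivAt_φ' t).deriv]
    have he := Real.exp_pos t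
    have hp := one_add_exp_pos t
    rw [sub_nonneg, div_le_iff₀ (by positivity)]
    nlinarith [sq_nonneg (1 - Real.exp t)]

lemma tangent_le (x₀ x : ℝ) : φ x₀ + (x₀ / 4 - Real.exp x₀ / (1 + Real.exp x₀)) * (x - x₀) ≤ φ x := by
  rcases lt_trichotomy x₀ x with h | h | h
  · have := convex_φ.le_slope_of_hasDerivAt (Set.mem_univ x₀) (Set.mem_univ x) h (hasDerivAt_φ x₀)
    rw [slope_def_field] at this
    have hx : 0 < x - x₀ := by linarith
    have := (le_div_iff₀ hx).mp this
    nlinarith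
  · simp [h]
  · have := convex_φ.slope_le_of_hasDerivAt (Set.mem_univ x) (Set.mem_univ x₀) h (hasDerivAt_φ x₀)
    rw [slope_def_field] at this
    have hx : 0 < x₀ - x := by linarith
    have := (div_le_iff₀ hx).mp this
    nlinarith

/-- Quadratic majorization of `log(1+exp x)` at `x₀` (curvature 1/4), and the
resulting quadratic minorization of the logistic log-likelihood `s·x − log(1+exp x)`. -/
theorem logistic_quadratic_bound (x₀ x : ℝ) :
    Real.log (1 + Real.exp x) ≤
      Real.log (1 + Real.exp x₀) + logistic x₀ * (x - x₀) + (1 / 8) * (x - x₀) ^ 2 ∧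
    ∀ s : ℝ,
      s * x₀ - Real.log (1 + Real.exp x₀) + (s - logistic x₀) * (x - x₀)
          - (1 / 8) * (x - x₀) ^ 2
        ≤ s * x - Real.log (1 + Real.exp x) := by
  have key := tangent_le x₀ x
  unfold φ at key
  rw [logistic_eq]
  constructor
  · nlinarith [key]
  · intro s
    nlinarith [key]
end

section
/- Fix k ∈ {1,…,c}, U ∈ {−1,+1}^{n×c}, S ∈ {0,1}^{n×n}, and the columns of V other than column k, and view L as a function of the column v = V_{*k}. Let v₀ ∈ {−1,+1}^n be the current column, let b = h(v₀) + (nλ²/(4c²))·v₀ where h(v₀)_j = (λ/c)·Σ_{i=1}^n (S_{ij} − A_{ij}(v₀))·U_{ik}, and let v' ∈ {−1,+1}^n be any vector satisfying v'_j·b_j = |b_j| for all j (i.e., v' agrees with sign(b) wherever b_j ≠ 0, as in update rule (4)). Then L(v') ≥ L(v₀): the DLFH column update for V never decreases the objective. -/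
open scoped BigOperators

lemma hasDerivAt_logexp (x : ℝ) :
    HasDerivAt (fun t => Real.log (1 + Real.exp t)) (logistic x) x := by
  have h1 : HasDerivAt (fun t : ℝ => 1 + Real.exp t) (Real.exp x) x :=
    (Real.hasDerivAt_exp x).const_add 1
  have h2 := h1.log (by positivity)
  convert h2 using 1
  unfold logistic
  rw [Real.exp_neg]
  have hx := Real.exp_pos x
  field_simp
  ring

lemma hasDerivAt_logistic (x : ℝ) :
    HasDerivAt logistic (Real.exp (-x) / (1 + Real.exp (-x))^2) x := by
  have h1 : HasDerivAt (fun t : ℝ => 1 + Real.exp (-t)) (-Real.exp (-x)) x := by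
    have h := (Real.hasDerivAt_exp (-x)).comp x (hasDerivAt_neg x)
    simpa using h.const_add 1
  have h2 := h1.inv (by positivity)
  have : logistic = fun t : ℝ => (1 + Real.exp (-t))⁻¹ := by
    funext t; simp [logistic, one_div]
  rw [this]
  refine h2.congr_deriv ?_
  ring

lemma psi_mono : Monotone (fun t : ℝ => t / 4 - logistic t) := by
  have hd : ∀ x : ℝ, HasDerivAt (fun t : ℝ => t / 4 - logistic t)
      (1 / 4 - Real.exp (-x) / (1 + Real.exp (-x))^2) x := by
    intro x
    have := ((hasDerivAt_id x).div_const 4).sub (hasDerivAt_logistic x)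
    exact this
  apply monotone_of_deriv_nonneg
  · exact fun x => (hd x).differentiableAt
  · intro x
    rw [(hd x).deriv]
    have h := Real.exp_pos (-x)
    have h2 : (0:ℝ) < (1 + Real.exp (-x))^2 := by positivity
    rw [sub_nonneg, div_le_iff₀ h2]
    nlinarith [sq_nonneg (1 - Real.exp (-x))]

lemma key_quad (a t : ℝ) :
    Real.log (1 + Real.exp t) ≤
      Real.log (1 + Real.exp a) + logistic a * (t - a) + (1/8) * (t - a)^2 := by
  set φ : ℝ → ℝ := fun s =>
    Real.log (1 + Real.exp a) + logistic a * (s - a) + (1/8) * (s - a)^2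
      - Real.log (1 + Real.exp s) with hφ
  have hφd : ∀ x : ℝ, HasDerivAt φ ((x / 4 - logistic x) - (a / 4 - logistic a)) x := by
    intro x
    have h1 : HasDerivAt (fun s : ℝ => s - a) 1 x := (hasDerivAt_id x).sub_const a
    have h2 := h1.const_mul (logistic a)
    have h3 : HasDerivAt (fun s : ℝ => (1/8) * (s - a)^2)
        ((1/8) * ((2:ℕ) * (x - a)^1 * 1)) x := (h1.pow 2).const_mul (1/8)
    have h4 := ((h2.const_add (Real.log (1 + Real.exp a))).add h3).sub (hasDerivAt_logexp x)
    refine h4.congr_deriv ?_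
    push_cast
    ring
  have hφa : φ a = 0 := by simp [hφ]
  have hdiff : Differentiable ℝ φ := fun x => (hφd x).differentiableAt
  have hres : 0 ≤ φ t := by
    rcases le_total a t with h | h
    · have hmono : MonotoneOn φ (Set.Ici a) := by
        apply monotoneOn_of_deriv_nonneg (convex_Ici a) hdiff.continuous.continuousOn
          (hdiff.differentiableOn)
        intro x hx
        rw [(hφd x).deriv, sub_nonneg]
        exact psi_mono (le_of_lt (by simpa using hx))
      have := hmono (Set.self_mem_Ici) (by exact h) h
      linarith [hφa ▸ this]
    · have hmono : AntitoneOn φ (Set.Iic a) := by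
        apply antitoneOn_of_deriv_nonpos (convex_Iic a) hdiff.continuous.continuousOn
          (hdiff.differentiableOn)
        intro x hx
        rw [(hφd x).deriv, sub_nonpos]
        exact psi_mono (le_of_lt (by simpa using hx))
      have := hmono (by exact h) (Set.self_mem_Iic) h
      linarith [hφa ▸ this]
  simp only [hφ] at hres
  linarith

/-- The DLFH column update (4) for `V` never decreases the objective: if `v₀` is the
current column of `V`, `b = h(v₀) + (nλ²/(4c²))·v₀`, and `v' ∈ {−1,+1}^n` satisfies
`v'_j·b_j = |b_j|` for all `j`, then `L(v') ≥ L(v₀)`. -/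
theorem dlfh_update_V_ascent (n c : ℕ) (hn : 1 ≤ n) (hc : 1 ≤ c)
    (lam : ℝ) (hlam : 0 < lam) (k : Fin c)
    (U V : Fin n → Fin c → ℝ)
    (hU : ∀ i k', U i k' = 1 ∨ U i k' = -1)
    (hV : ∀ j k', V j k' = 1 ∨ V j k' = -1)
    (S : Fin n → Fin n → ℝ)
    (hS : ∀ i j, S i j = 0 ∨ S i j = 1)
    (Θ : (Fin n → ℝ) → Fin n → Fin n → ℝ)
    (hΘ : ∀ v i j, Θ v i j =
      (lam / c) * (U i k * v j + ∑ k' ∈ Finset.univ.erase k, U i k' * V j k'))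
    (L : (Fin n → ℝ) → ℝ)
    (hL : ∀ v, L v = ∑ i : Fin n, ∑ j : Fin n,
      (S i j * Θ v i j - Real.log (1 + Real.exp (Θ v i j))))
    (v₀ : Fin n → ℝ) (hv₀ : ∀ j, v₀ j = 1 ∨ v₀ j = -1)
    (b : Fin n → ℝ)
    (hb : ∀ j, b j = (lam / c) * (∑ i : Fin n, (S i j - logistic (Θ v₀ i j)) * U i k)
      + (n * lam ^ 2 / (4 * c ^ 2)) * v₀ j)
    (v' : Fin n → ℝ) (hv' : ∀ j, v' j = 1 ∨ v' j = -1)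
    (hmax : ∀ j, v' j * b j = |b j|) :
    L v₀ ≤ L v' := by
  have hswap : ∀ v, L v = ∑ j : Fin n, ∑ i : Fin n,
      (S i j * Θ v i j - Real.log (1 + Real.exp (Θ v i j))) := fun v =>
    (hL v).trans Finset.sum_comm
  rw [hswap, hswap]
  apply Finset.sum_le_sum
  intro j _
  set d : ℝ := v' j - v₀ j with hd
  have hΔ : ∀ i, Θ v' i j = Θ v₀ i j + (lam / c) * (U i k * d) := by
    intro i; rw [hΘ, hΘ]; ring
  -- pointwise bound
  have hstep : ∀ i ∈ Finset.univ,
      (S i j * Θ v₀ i j - Real.log (1 + Real.exp (Θ v₀ i j)))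
        + ((S i j - logistic (Θ v₀ i j)) * ((lam / c) * (U i k * d))
          - (1/8) * ((lam / c) * (U i k * d))^2)
      ≤ S i j * Θ v' i j - Real.log (1 + Real.exp (Θ v' i j)) := by
    intro i _
    have hk := key_quad (Θ v₀ i j) (Θ v' i j)
    rw [hΔ i] at hk ⊢
    nlinarith [hk]
  have hsum := Finset.sum_le_sum hstep
  rw [Finset.sum_add_distrib] at hsum
  -- the extra term equals b j * v' j - b j * v₀ j
  have hU2 : ∀ i, U i k ^ 2 = 1 := by
    intro i; rcases hU i k with h | h <;> rw [h] <;> norm_num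
  have hv02 : v₀ j ^ 2 = 1 := by rcases hv₀ j with h | h <;> rw [h] <;> norm_num
  have hv'2 : v' j ^ 2 = 1 := by rcases hv' j with h | h <;> rw [h] <;> norm_num
  have hextra : ∑ i : Fin n, ((S i j - logistic (Θ v₀ i j)) * ((lam / c) * (U i k * d))
        - (1/8) * ((lam / c) * (U i k * d))^2)
      = b j * v' j - b j * v₀ j := by
    have h1 : ∑ i : Fin n, ((S i j - logistic (Θ v₀ i j)) * ((lam / c) * (U i k * d))
          - (1/8) * ((lam / c) * (U i k * d))^2)
        = (lam / c) * (∑ i : Fin n, (S i j - logistic (Θ v₀ i j)) * U i k) * d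
          - (n : ℝ) * ((1/8) * (lam / c)^2 * d^2) := by
      rw [Finset.sum_sub_distrib, Finset.mul_sum, Finset.sum_mul]
      congr 1
      · exact Finset.sum_congr rfl fun i _ => by ring
      · rw [Finset.sum_congr rfl (fun i _ => by
          have := hU2 i; nlinarith [hU2 i] : ∀ i ∈ Finset.univ,
            (1/8) * ((lam / c) * (U i k * d))^2 = (1/8) * (lam / c)^2 * d^2)]
        rw [Finset.sum_const, Finset.card_univ, Fintype.card_fin, nsmul_eq_mul]
    rw [h1, hb j]
    linear_combination (-(↑n * lam^2 / (8 * (c:ℝ)^2))) * hv'2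
      + (↑n * lam^2 / (8 * (c:ℝ)^2)) * hv02
  have hbv : b j * v₀ j ≤ b j * v' j := by
    have h := hmax j
    rcases hv₀ j with h0 | h0 <;> rw [h0] <;>
      [skip; skip] <;> nlinarith [le_abs_self (b j), neg_abs_le (b j), hmax j]
  calc ∑ i : Fin n, (S i j * Θ v₀ i j - Real.log (1 + Real.exp (Θ v₀ i j)))
      ≤ ∑ i : Fin n, (S i j * Θ v₀ i j - Real.log (1 + Real.exp (Θ v₀ i j)))
        + (b j * v' j - b j * v₀ j) := by linarith
    _ ≤ ∑ i : Fin n, (S i j * Θ v' i j - Real.log (1 + Real.exp (Θ v' i j))) := by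
        rw [← hextra]; exact hsum
end

section
/- Let (U, V) ∈ {−1,+1}^{n×c} × {−1,+1}^{n×c} and let (U', V') be obtained from (U, V) by any finite sequence of single-column updates, where each step replaces one column U_{*k} (respectively V_{*k}) by a vector u' ∈ {−1,+1}^n satisfying u'_i·b_i = |b_i| for all i with b the corresponding surrogate-gradient vector b = g(current column) + (nλ²/(4c²))·(current column). Then L(U', V') ≥ L(U, V). In particular, one full iteration of Algorithm 1 (updating all c columns of U via rule (3) and then all c columns of V via rule (4)) never decreases the DLFH objective. -/
open scoped BigOperators

/-- `Θ_{ij} = (λ/c)·Σ_k U_{ik}·V_{jk}`. -/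
noncomputable def dlfhTheta {n c : ℕ} (lam : ℝ) (U V : Fin n → Fin c → ℝ)
    (i j : Fin n) : ℝ :=
  (lam / c) * ∑ k : Fin c, U i k * V j k

/-- The DLFH objective `L(U,V) = Σ_{i,j} [S_{ij}·Θ_{ij} − log(1+exp(Θ_{ij}))]`. -/
noncomputable def dlfhObj {n c : ℕ} (lam : ℝ) (S : Fin n → Fin n → ℝ)
    (p : (Fin n → Fin c → ℝ) × (Fin n → Fin c → ℝ)) : ℝ :=
  ∑ i : Fin n, ∑ j : Fin n,
    (S i j * dlfhTheta lam p.1 p.2 i j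
      - Real.log (1 + Real.exp (dlfhTheta lam p.1 p.2 i j)))

/-- The surrogate-gradient vector for an update of column `k` of `U`:
`b_i = (λ/c)·Σ_j (S_{ij} − A_{ij})·V_{jk} + (nλ²/(4c²))·U_{ik}`. -/
noncomputable def dlfhBU {n c : ℕ} (lam : ℝ) (S : Fin n → Fin n → ℝ)
    (U V : Fin n → Fin c → ℝ) (k : Fin c) (i : Fin n) : ℝ :=
  (lam / c) * (∑ j : Fin n, (S i j - logistic (dlfhTheta lam U V i j)) * V j k)
    + (n * lam ^ 2 / (4 * c ^ 2)) * U i k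

/-- The surrogate-gradient vector for an update of column `k` of `V`:
`b_j = (λ/c)·Σ_i (S_{ij} − A_{ij})·U_{ik} + (nλ²/(4c²))·V_{jk}`. -/
noncomputable def dlfhBV {n c : ℕ} (lam : ℝ) (S : Fin n → Fin n → ℝ)
    (U V : Fin n → Fin c → ℝ) (k : Fin c) (j : Fin n) : ℝ :=
  (lam / c) * (∑ i : Fin n, (S i j - logistic (dlfhTheta lam U V i j)) * U i k)
    + (n * lam ^ 2 / (4 * c ^ 2)) * V j k

/-- A single-column update step of Algorithm 1: one column of `U` (rule (3)) or one
column of `V` (rule (4)) is replaced by a `±1` vector maximizing the linear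
surrogate, all other entries being unchanged. -/
def DLFHStep {n c : ℕ} (lam : ℝ) (S : Fin n → Fin n → ℝ)
    (p p' : (Fin n → Fin c → ℝ) × (Fin n → Fin c → ℝ)) : Prop :=
  (∃ k : Fin c,
    p'.2 = p.2 ∧
    (∀ i, ∀ k' ≠ k, p'.1 i k' = p.1 i k') ∧
    (∀ i, p'.1 i k = 1 ∨ p'.1 i k = -1) ∧
    (∀ i, p'.1 i k * dlfhBU lam S p.1 p.2 k i = |dlfhBU lam S p.1 p.2 k i|)) ∨
  (∃ k : Fin c,
    p'.1 = p.1 ∧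
    (∀ j, ∀ k' ≠ k, p'.2 j k' = p.2 j k') ∧
    (∀ j, p'.2 j k = 1 ∨ p'.2 j k = -1) ∧
    (∀ j, p'.2 j k * dlfhBV lam S p.1 p.2 k j = |dlfhBV lam S p.1 p.2 k j|))


lemma hoeff_aux (s : ℝ) (hs0 : 0 < s) (hs1 : s < 1) (t : ℝ) :
    Real.log (1 - s + s * Real.exp t) ≤ s * t + t ^ 2 / 8 := by
  have hD : ∀ x : ℝ, 0 < 1 - s + s * Real.exp x := by
    intro x
    have := mul_pos hs0 (Real.exp_pos x)
    linarith
  set g : ℝ → ℝ := fun x => s * x + x ^ 2 / 8 - Real.log (1 - s + s * Real.exp x) with hg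
  set G : ℝ → ℝ := fun x => s + x / 4 - s * Real.exp x / (1 - s + s * Real.exp x) with hGdef
  have hDden : ∀ x : ℝ, HasDerivAt (fun x => 1 - s + s * Real.exp x) (s * Real.exp x) x :=
    fun x => ((Real.hasDerivAt_exp x).const_mul s).const_add (1 - s)
  have hg' : ∀ x, HasDerivAt g (G x) x := by
    intro x
    have hlog : HasDerivAt (fun x => Real.log (1 - s + s * Real.exp x))
        (s * Real.exp x / (1 - s + s * Real.exp x)) x := (hDden x).log (ne_of_gt (hD x))
    have h1 : HasDerivAt (fun x => s * x + x ^ 2 / 8) (s + x / 4) x := by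
      have := ((hasDerivAt_id x).const_mul s).add ((hasDerivAt_pow 2 x).div_const 8)
      refine this.congr_deriv ?_
      simp; ring
    exact h1.sub hlog
  have hG' : ∀ x, HasDerivAt G
      (1 / 4 - s * Real.exp x * (1 - s) / (1 - s + s * Real.exp x) ^ 2) x := by
    intro x
    have hnum : HasDerivAt (fun x => s * Real.exp x) (s * Real.exp x) x :=
      (Real.hasDerivAt_exp x).const_mul s
    have hquot := hnum.div (hDden x) (ne_of_gt (hD x))
    have hlin : HasDerivAt (fun x => s + x / 4) (1 / 4 : ℝ) x := by
      have := ((hasDerivAt_id x).div_const 4).const_add s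
      exact this
    have := hlin.sub hquot
    refine this.congr_deriv ?_
    have h2 : (1 - s + s * Real.exp x) ^ 2 ≠ 0 := pow_ne_zero _ (ne_of_gt (hD x))
    field_simp
    ring
  have hG'nonneg : ∀ x, 0 ≤ 1 / 4 - s * Real.exp x * (1 - s) / (1 - s + s * Real.exp x) ^ 2 := by
    intro x
    have hx := hD x
    rw [sub_nonneg, div_le_iff₀ (by positivity)]
    nlinarith [sq_nonneg (s * Real.exp x - (1 - s)), Real.exp_pos x]
  have hGmono : Monotone G := by
    have hdiff : Differentiable ℝ G := fun x => (hG' x).differentiableAt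
    apply monotone_of_deriv_nonneg hdiff
    intro x
    rw [(hG' x).deriv]
    exact hG'nonneg x
  have hG0 : G 0 = 0 := by
    have h1 : (1 : ℝ) - s + s * Real.exp 0 = 1 := by rw [Real.exp_zero]; ring
    simp only [hGdef, h1, Real.exp_zero]
    field_simp
    ring
  have hg0 : g 0 = 0 := by
    have h1 : (1 : ℝ) - s + s * Real.exp 0 = 1 := by rw [Real.exp_zero]; ring
    simp only [hg, h1, Real.log_one]
    norm_num
  have hgdiff : Differentiable ℝ g := fun x => (hg' x).differentiableAt
  have key : 0 ≤ g t := by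
    rcases le_total 0 t with ht | ht
    · have hmono : MonotoneOn g (Set.Ici 0) := by
        apply monotoneOn_of_deriv_nonneg (convex_Ici 0) hgdiff.continuous.continuousOn
          (hgdiff.differentiableOn)
        intro x hx
        rw [interior_Ici] at hx
        rw [(hg' x).deriv, ← hG0]
        exact hGmono (le_of_lt hx)
      have := hmono (Set.self_mem_Ici) (Set.mem_Ici.mpr ht) ht
      linarith [hg0]
    · have hanti : AntitoneOn g (Set.Iic 0) := by
        apply antitoneOn_of_deriv_nonpos (convex_Iic 0) hgdiff.continuous.continuousOn
          (hgdiff.differentiableOn)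
        intro x hx
        rw [interior_Iic] at hx
        rw [(hg' x).deriv, ← hG0]
        exact hGmono (le_of_lt hx)
      have := hanti (Set.mem_Iic.mpr ht) (Set.self_mem_Iic) ht
      linarith [hg0]
  simp only [hg] at key
  linarith

lemma log1exp_bound (θ h : ℝ) :
    Real.log (1 + Real.exp (θ + h))
      ≤ Real.log (1 + Real.exp θ) + logistic θ * h + h ^ 2 / 8 := by
  have h1 : (0 : ℝ) < 1 + Real.exp θ := by positivity
  have hs : logistic θ = Real.exp θ / (1 + Real.exp θ) := by
    unfold logistic
    rw [Real.exp_neg]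
    field_simp
    ring
  have hs0 : 0 < logistic θ := by rw [hs]; positivity
  have hs1 : logistic θ < 1 := by
    rw [hs, div_lt_one h1]; linarith
  have key : 1 - logistic θ + logistic θ * Real.exp h
      = (1 + Real.exp (θ + h)) / (1 + Real.exp θ) := by
    rw [hs, Real.exp_add]
    field_simp
    ring
  have hmain := hoeff_aux (logistic θ) hs0 hs1 h
  rw [key, Real.log_div (by positivity) (ne_of_gt h1)] at hmain
  linarith

lemma phi_bound (Sv θ θ' : ℝ) :
    (Sv - logistic θ) * (θ' - θ) - (θ' - θ) ^ 2 / 8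
      ≤ (Sv * θ' - Real.log (1 + Real.exp θ'))
        - (Sv * θ - Real.log (1 + Real.exp θ)) := by
  have := log1exp_bound θ (θ' - θ)
  rw [show θ + (θ' - θ) = θ' by ring] at this
  nlinarith [this]

lemma dlfh_stepU {n c : ℕ} (lam : ℝ) (S : Fin n → Fin n → ℝ)
    (U U' V : Fin n → Fin c → ℝ) (k : Fin c)
    (hU : ∀ i k, U i k = 1 ∨ U i k = -1)
    (hV : ∀ j k, V j k = 1 ∨ V j k = -1)
    (hold : ∀ i, ∀ k' ≠ k, U' i k' = U i k')
    (hpm : ∀ i, U' i k = 1 ∨ U' i k = -1)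
    (hopt : ∀ i, U' i k * dlfhBU lam S U V k i = |dlfhBU lam S U V k i|) :
    dlfhObj lam S (U, V) ≤ dlfhObj lam S (U', V) := by
  have hθ : ∀ i j, dlfhTheta lam U' V i j
      = dlfhTheta lam U V i j + (lam / c) * ((U' i k - U i k) * V j k) := by
    intro i j
    have h2 : ∑ k' : Fin c, (U' i k' * V j k' - U i k' * V j k')
        = (U' i k - U i k) * V j k := by
      rw [Finset.sum_eq_single k]
      · ring
      · intro b _ hb; rw [hold i b hb]; ring
      · intro hk; exact absurd (Finset.mem_univ k) hk
    rw [Finset.sum_sub_distrib] at h2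
    simp only [dlfhTheta]
    have : ∑ k' : Fin c, U' i k' * V j k'
        = (∑ k' : Fin c, U i k' * V j k') + (U' i k - U i k) * V j k := by linarith
    rw [this]; ring
  simp only [dlfhObj]
  apply Finset.sum_le_sum
  intro i _
  have hV2 : ∀ j, V j k * V j k = 1 := by
    intro j; rcases hV j k with h | h <;> rw [h] <;> norm_num
  have hu2 : U i k * U i k = 1 := by
    rcases hU i k with h | h <;> rw [h] <;> norm_num
  have hu'2 : U' i k * U' i k = 1 := by
    rcases hpm i with h | h <;> rw [h] <;> norm_num
  have hrow : ∑ j : Fin n,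
      ((S i j - logistic (dlfhTheta lam U V i j))
          * (dlfhTheta lam U' V i j - dlfhTheta lam U V i j)
        - (dlfhTheta lam U' V i j - dlfhTheta lam U V i j) ^ 2 / 8)
      ≤ ∑ j : Fin n,
        ((S i j * dlfhTheta lam U' V i j - Real.log (1 + Real.exp (dlfhTheta lam U' V i j)))
          - (S i j * dlfhTheta lam U V i j - Real.log (1 + Real.exp (dlfhTheta lam U V i j)))) :=
    Finset.sum_le_sum fun j _ => phi_bound _ _ _
  have hperj : ∀ j, (S i j - logistic (dlfhTheta lam U V i j))
          * (dlfhTheta lam U' V i j - dlfhTheta lam U V i j)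
        - (dlfhTheta lam U' V i j - dlfhTheta lam U V i j) ^ 2 / 8
      = (lam / c) * (U' i k - U i k)
          * ((S i j - logistic (dlfhTheta lam U V i j)) * V j k)
        - (lam / c) ^ 2 * (1 - U' i k * U i k) / 4 := by
    intro j
    rw [hθ i j]
    linear_combination (-(lam / (c : ℝ)) ^ 2 * (U' i k - U i k) ^ 2 / 8) * hV2 j
      + (-(lam / (c : ℝ)) ^ 2 / 8) * hu'2 + (-(lam / (c : ℝ)) ^ 2 / 8) * hu2
  have hLHS : ∑ j : Fin n,
      ((S i j - logistic (dlfhTheta lam U V i j))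
          * (dlfhTheta lam U' V i j - dlfhTheta lam U V i j)
        - (dlfhTheta lam U' V i j - dlfhTheta lam U V i j) ^ 2 / 8)
      = (U' i k - U i k) * dlfhBU lam S U V k i := by
    rw [Finset.sum_congr rfl fun j _ => hperj j]
    rw [Finset.sum_sub_distrib, Finset.sum_const, Finset.card_univ, Fintype.card_fin,
      ← Finset.mul_sum, nsmul_eq_mul]
    simp only [dlfhBU]
    linear_combination ((n : ℝ) * lam ^ 2 / (4 * (c : ℝ) ^ 2)) * hu2
  have hpos : 0 ≤ (U' i k - U i k) * dlfhBU lam S U V k i := by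
    have h1 := hopt i
    have h2 : U i k * dlfhBU lam S U V k i ≤ |dlfhBU lam S U V k i| := by
      rcases hU i k with h | h <;> rw [h]
      · simpa using le_abs_self (dlfhBU lam S U V k i)
      · simpa using neg_le_abs (dlfhBU lam S U V k i)
    have h3 : (U' i k - U i k) * dlfhBU lam S U V k i
        = U' i k * dlfhBU lam S U V k i - U i k * dlfhBU lam S U V k i := by ring
    rw [h3, h1]
    linarith
  rw [hLHS] at hrow
  rw [Finset.sum_sub_distrib] at hrow
  linarith

lemma theta_swap {n c : ℕ} (lam : ℝ) (U V : Fin n → Fin c → ℝ) (i j : Fin n) :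
    dlfhTheta lam V U j i = dlfhTheta lam U V i j := by
  unfold dlfhTheta
  congr 1
  exact Finset.sum_congr rfl fun k _ => mul_comm _ _

lemma obj_swap {n c : ℕ} (lam : ℝ) (S : Fin n → Fin n → ℝ) (U V : Fin n → Fin c → ℝ) :
    dlfhObj lam (fun a b => S b a) (V, U) = dlfhObj lam S (U, V) := by
  unfold dlfhObj
  simp only [theta_swap lam U V]
  exact Finset.sum_comm

lemma bv_eq {n c : ℕ} (lam : ℝ) (S : Fin n → Fin n → ℝ)
    (U V : Fin n → Fin c → ℝ) (k : Fin c) (j : Fin n) :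
    dlfhBV lam S U V k j = dlfhBU lam (fun a b => S b a) V U k j := by
  simp only [dlfhBU, dlfhBV, theta_swap lam U V]

lemma dlfh_step_mono {n c : ℕ} (lam : ℝ) (S : Fin n → Fin n → ℝ)
    (p p' : (Fin n → Fin c → ℝ) × (Fin n → Fin c → ℝ))
    (hU : ∀ i k, p.1 i k = 1 ∨ p.1 i k = -1)
    (hV : ∀ j k, p.2 j k = 1 ∨ p.2 j k = -1)
    (hstep : DLFHStep lam S p p') :
    (∀ i k, p'.1 i k = 1 ∨ p'.1 i k = -1) ∧
    (∀ j k, p'.2 j k = 1 ∨ p'.2 j k = -1) ∧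
    dlfhObj lam S p ≤ dlfhObj lam S p' := by
  rcases hstep with ⟨k, hV', hold, hpm, hopt⟩ | ⟨k, hU', hold, hpm, hopt⟩
  · refine ⟨?_, ?_, ?_⟩
    · intro i k'
      by_cases h : k' = k
      · subst h; exact hpm i
      · rw [hold i k' h]; exact hU i k'
    · intro j k'; rw [hV']; exact hV j k'
    · have hobj := dlfh_stepU lam S p.1 p'.1 p.2 k hU hV hold hpm hopt
      have hp' : p' = (p'.1, p.2) := by rw [← hV']
      rw [hp']
      exact hobj
  · refine ⟨?_, ?_, ?_⟩
    · intro i k'; rw [hU']; exact hU i k'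
    · intro j k'
      by_cases h : k' = k
      · subst h; exact hpm j
      · rw [hold j k' h]; exact hV j k'
    · have hopt' : ∀ j, p'.2 j k * dlfhBU lam (fun a b => S b a) p.2 p.1 k j
          = |dlfhBU lam (fun a b => S b a) p.2 p.1 k j| := by
        intro j; rw [← bv_eq]; exact hopt j
      have hobj := dlfh_stepU lam (fun a b => S b a) p.2 p'.2 p.1 k hV hU hold hpm hopt'
      rw [obj_swap lam S p.1 p.2, obj_swap lam S p.1 p'.2] at hobj
      have hp' : p' = (p.1, p'.2) := by rw [← hU']
      rw [hp']
      exact hobj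

/-- Any finite sequence of single-column updates (in particular one full iteration
of Algorithm 1, updating all `c` columns of `U` via rule (3) and then all `c`
columns of `V` via rule (4)) never decreases the DLFH objective. -/
theorem dlfh_full_iteration_ascent (n c : ℕ) (hn : 1 ≤ n) (hc : 1 ≤ c)
    (lam : ℝ) (hlam : 0 < lam)
    (S : Fin n → Fin n → ℝ)
    (hS : ∀ i j, S i j = 0 ∨ S i j = 1)
    (p p' : (Fin n → Fin c → ℝ) × (Fin n → Fin c → ℝ))
    (hU : ∀ i k, p.1 i k = 1 ∨ p.1 i k = -1)
    (hV : ∀ j k, p.2 j k = 1 ∨ p.2 j k = -1)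
    (hsteps : Relation.ReflTransGen (DLFHStep lam S) p p') :
    dlfhObj lam S p ≤ dlfhObj lam S p' := by
  have key : ∀ q, Relation.ReflTransGen (DLFHStep lam S) p q →
      (∀ i k, q.1 i k = 1 ∨ q.1 i k = -1) ∧
      (∀ j k, q.2 j k = 1 ∨ q.2 j k = -1) ∧
      dlfhObj lam S p ≤ dlfhObj lam S q := by
    intro q hq
    induction hq with
    | refl => exact ⟨hU, hV, le_refl _⟩
    | tail _ hbc ih =>
      obtain ⟨h1, h2, h3⟩ := ih
      obtain ⟨g1, g2, g3⟩ := dlfh_step_mono lam S _ _ h1 h2 hbc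
      exact ⟨g1, g2, h3.trans g3⟩
  exact (key p' hsteps).2.2
end
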